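/- With the notation and hypotheses of the rational-solution setup below, the subspace W ⊆ 𝔤((z)) is Lagrangian with respect to the pairing κ̄: W^⊥ = W, where W^⊥ = {u ∈ 𝔤((z)) : κ̄(u,w) = 0 for all w ∈ W}. -/

import Mathlib

open scoped TensorProduct
open Finset

/- We remove two instances that create (non-definitionally-equal) instance diamonds for
`LaurentSeries ℂ`, so that `ℂ((z))` carries its canonical `ℂ`-algebra structure
`HahnSeries.instAlgebra` and the induced `ℂ`-module structure. -/
attribute [-instance] HahnSeries.instModule
attribute [-instance] HahnSeries.powerSeriesAlgebra

noncomputable section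

/-- The field `ℂ((z))` of formal Laurent series. -/
abbrev Kz : Type := LaurentSeries ℂ

/-- The monomial `z^k ∈ ℂ((z))`. -/
def zm (k : ℤ) : Kz := HahnSeries.single k (1 : ℂ)

/-- Extraction of the `k`-th coefficient of a Laurent series, as a `ℂ`-linear map. -/
def coeffL (k : ℤ) : Kz →ₗ[ℂ] ℂ where
  toFun f := f.coeff k
  map_add' f g := by simp
  map_smul' c f := by
    show (c • f).coeff k = c • f.coeff k
    rw [HahnSeries.coeff_smul]

variable (L : Type*) [LieRing L] [LieAlgebra ℂ L]

/-- The `k`-th coefficient of an element of `𝔤((z)) = ℂ((z)) ⊗ 𝔤`, as an element of `𝔤`. -/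
def coeffT (k : ℤ) : (Kz ⊗[ℂ] L) →ₗ[ℂ] L :=
  (TensorProduct.lid ℂ L).toLinearMap ∘ₗ LinearMap.rTensor L (coeffL k)

/-- The subalgebra `𝔤[[z]] ⊆ 𝔤((z))`: elements with vanishing negative coefficients. -/
def gPow : Submodule ℂ (Kz ⊗[ℂ] L) :=
  ⨅ (k : ℤ) (_ : k < 0), LinearMap.ker (coeffT L k)

/-- The residue pairing `κ̄(f,g) = res₀(κ(f,g)dz)` on `𝔤((z))`: the coefficient of `z⁻¹`
in the base-changed Killing form, so that `κ̄(a z^l, b z^k) = κ(a,b)` if `l+k = −1` and `0`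
otherwise. -/
def KB (x y : Kz ⊗[ℂ] L) : ℂ :=
  (((killingForm ℂ L).baseChange Kz) x y).coeff (-1)

variable {L}

/-- The element `f_{k,l} = z^{−k−1} e_l + p_{k,l}(z)` of `𝔤((z))`, where the `𝔤`-valued
polynomial `p_{k,l}` is recorded by its finitely supported family of coefficients
`P k l : ℕ →₀ 𝔤`. -/
def fEl {d : ℕ} (e : Fin d → L) (P : ℕ → Fin d → ℕ →₀ L) (k : ℕ) (l : Fin d) :
    Kz ⊗[ℂ] L :=
  zm (-(k : ℤ) - 1) ⊗ₜ[ℂ] e l + (P k l).sum fun m a => zm (m : ℤ) ⊗ₜ[ℂ] a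

/-- `W ⊆ 𝔤((z))`: the `ℂ`-linear span of the elements `f_{k,l}`. -/
def Wsub {d : ℕ} (e : Fin d → L) (P : ℕ → Fin d → ℕ →₀ L) :
    Submodule ℂ (Kz ⊗[ℂ] L) :=
  Submodule.span ℂ {w | ∃ (k : ℕ) (l : Fin d), w = fEl e P k l}

/-- The polynomial `v(x,y) = Σ_{k=0}^{t} Σ_{l=1}^{d} p_{k,l}(y) ⊗ x^k e_l ∈ (𝔤⊗𝔤)[x,y]`. -/
def vFun {d : ℕ} (t : ℕ) (e : Fin d → L) (P : ℕ → Fin d → ℕ →₀ L) (x y : ℂ) :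
    L ⊗[ℂ] L :=
  ∑ k ∈ range (t + 1), ∑ l : Fin d,
    ((P k l).sum fun m a => y ^ m • a) ⊗ₜ[ℂ] (x ^ k • e l)

/-- The rational r-matrix `r(x,y) = γ/(y−x) + v(x,y)`, where `γ = Σ_l e_l ⊗ e_l`. -/
def rFun {d : ℕ} (t : ℕ) (e : Fin d → L) (P : ℕ → Fin d → ℕ →₀ L) (x y : ℂ) :
    L ⊗[ℂ] L :=
  (y - x)⁻¹ • (∑ l : Fin d, e l ⊗ₜ[ℂ] e l) + vFun t e P x y
section Helpers
open Finset Polynomial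

lemma Kz.csmul_eq (c : ℂ) (x : Kz) : c • x = HahnSeries.single (0:ℤ) c * x :=
  (HahnSeries.single_zero_mul_eq_smul).symm

instance : IsScalarTower ℂ Kz Kz :=
  ⟨fun c x y => by rw [smul_eq_mul, smul_eq_mul, Kz.csmul_eq, Kz.csmul_eq, mul_assoc]⟩

instance : SMulCommClass ℂ Kz Kz :=
  ⟨fun c x y => by simp only [smul_eq_mul, Kz.csmul_eq]; ring⟩

lemma polyroots_zero (p : Polynomial ℂ) (x0 : ℂ) (h : ∀ y : ℂ, y ≠ x0 → p.eval y = 0) :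
    p = 0 := by
  apply Polynomial.eq_zero_of_infinite_isRoot
  apply Set.Infinite.mono (s := {x0}ᶜ)
  · intro y hy; exact h y hy
  · exact (Set.finite_singleton x0).infinite_compl

lemma poly1_zero (c : ℕ → ℂ) (M : ℕ) (x0 : ℂ)
    (h : ∀ x : ℂ, x ≠ x0 → ∑ k ∈ range M, c k * x ^ k = 0) :
    ∀ k, k < M → c k = 0 := by
  have hp : (∑ k ∈ range M, Polynomial.C (c k) * X ^ k) = 0 := by
    apply polyroots_zero _ x0
    intro y hy
    simpa only [eval_finset_sum, eval_mul, eval_C, eval_pow, eval_X] using h y hy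
  intro k hk
  have := congrArg (fun p => Polynomial.coeff p k) hp
  simpa [Polynomial.finset_sum_coeff, Polynomial.coeff_C_mul, Polynomial.coeff_X_pow,
    Finset.sum_ite_eq' (range M) k, hk] using this

lemma poly2_zero (c : ℕ → ℕ → ℂ) (M : ℕ)
    (h : ∀ x y : ℂ, x ≠ y → ∑ k ∈ range M, ∑ m ∈ range M, c k m * x ^ k * y ^ m = 0) :
    ∀ k m, k < M → m < M → c k m = 0 := by
  have h1 : ∀ x : ℂ, ∀ m, m < M → ∑ k ∈ range M, c k m * x ^ k = 0 := by
    intro x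
    apply poly1_zero (fun m => ∑ k ∈ range M, c k m * x ^ k) M x
    intro y hy
    rw [← h x y (Ne.symm hy), Finset.sum_comm]
    refine Finset.sum_congr rfl fun m _ => ?_
    rw [Finset.sum_mul]
  intro k m hk hm
  exact poly1_zero (fun k => c k m) M 0 (fun x _ => h1 x m hm) k hk

variable {L : Type*} [LieRing L] [LieAlgebra ℂ L]

/-- Coordinate along a basis direction. -/
def kco (a : L) : (Kz ⊗[ℂ] L) →ₗ[ℂ] Kz :=
  (TensorProduct.rid ℂ Kz).toLinearMap ∘ₗ LinearMap.lTensor Kz (killingForm ℂ L a)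

lemma kco_tmul (a : L) (f : Kz) (v : L) :
    kco a (f ⊗ₜ[ℂ] v) = killingForm ℂ L a v • f := by
  simp [kco]

/-- The functional `u ⊗ v ↦ κ(a,u) κ(b,v)` on `L ⊗ L`. -/
def phiAB (a b : L) : (L ⊗[ℂ] L) →ₗ[ℂ] ℂ :=
  (TensorProduct.lid ℂ ℂ).toLinearMap ∘ₗ
    TensorProduct.map (killingForm ℂ L a) (killingForm ℂ L b)

lemma phiAB_tmul (a b u v : L) :
    phiAB a b (u ⊗ₜ[ℂ] v) = killingForm ℂ L a u * killingForm ℂ L b v := by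
  simp [phiAB, smul_eq_mul]

lemma phiAB_comm (a b : L) (s : L ⊗[ℂ] L) :
    phiAB a b (TensorProduct.comm ℂ L L s) = phiAB b a s := by
  induction s using TensorProduct.induction_on with
  | zero => simp
  | tmul u v => rw [TensorProduct.comm_tmul, phiAB_tmul, phiAB_tmul]; ring
  | add x y hx hy => rw [map_add, map_add, map_add, hx, hy]

/-- `KB` as a bilinear map. -/
def KBL (L : Type*) [LieRing L] [LieAlgebra ℂ L] :
    (Kz ⊗[ℂ] L) →ₗ[ℂ] (Kz ⊗[ℂ] L) →ₗ[ℂ] ℂ :=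
  LinearMap.compr₂
    (LinearMap.restrictScalars₁₂ ℂ ℂ ((killingForm ℂ L).baseChange Kz))
    (coeffL (-1))

lemma KBL_apply (x y : Kz ⊗[ℂ] L) : KBL L x y = KB L x y := rfl

lemma KBL_tmul (f g : Kz) (u v : L) :
    KBL L (f ⊗ₜ[ℂ] u) (g ⊗ₜ[ℂ] v) = killingForm ℂ L u v * (f * g).coeff (-1) := by
  show (((killingForm ℂ L).baseChange Kz) (f ⊗ₜ u) (g ⊗ₜ v)).coeff (-1) = _
  rw [LinearMap.BilinForm.baseChange_tmul]
  show (killingForm ℂ L u v • (f * g)).coeff (-1) = _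
  rw [HahnSeries.coeff_smul, smul_eq_mul]

lemma zm_mul_coeff (i j : ℤ) : (zm i * zm j).coeff (-1) = if i + j = -1 then 1 else 0 := by
  rw [show zm i * zm j = HahnSeries.single (i+j) (1*1 : ℂ) from HahnSeries.single_mul_single]
  rw [HahnSeries.coeff_single]
  simp [eq_comm]

end Helpers
section Skew
open Finset

variable {L : Type*} [LieRing L] [LieAlgebra ℂ L] {d : ℕ}

/-- The scalar polynomial function `φ_{ab}(v(x,y))`. -/
def Sfun (t : ℕ) (e : Module.Basis (Fin d) ℂ L) (P : ℕ → Fin d → ℕ →₀ L)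
    (a b : Fin d) (x y : ℂ) : ℂ :=
  ∑ k ∈ range (t + 1),
    ((P k b).sum fun m c => y ^ m * killingForm ℂ L (e a) c) * x ^ k

lemma phi_vFun (t : ℕ) (e : Module.Basis (Fin d) ℂ L)
    (horth : ∀ i j, killingForm ℂ L (e i) (e j) = if i = j then 1 else 0)
    (P : ℕ → Fin d → ℕ →₀ L) (a b : Fin d) (x y : ℂ) :
    phiAB (e a) (e b) (vFun t ⇑e P x y) = Sfun t e P a b x y := by
  unfold vFun Sfun
  rw [map_sum]
  refine Finset.sum_congr rfl fun k _ => ?_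
  rw [map_sum]
  have hterm : ∀ l : Fin d,
      phiAB (e a) (e b) (((P k l).sum fun m c => y ^ m • c) ⊗ₜ[ℂ] (x ^ k • e l))
        = if b = l then ((P k l).sum fun m c => y ^ m * killingForm ℂ L (e a) c) * x ^ k
          else 0 := by
    intro l
    rw [phiAB_tmul, map_smul, smul_eq_mul, horth b l]
    simp only [Finsupp.sum]
    rw [map_sum]
    by_cases hbl : b = l
    · simp only [hbl, if_pos rfl, mul_one, map_smul, smul_eq_mul, Finset.sum_mul]
      exact Finset.sum_congr rfl fun m _ => by simp
    · simp [hbl]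
  rw [Finset.sum_congr rfl fun l _ => hterm l, Finset.sum_ite_eq (univ : Finset (Fin d)) b]
  simp

lemma phi_rFun (t : ℕ) (e : Module.Basis (Fin d) ℂ L)
    (horth : ∀ i j, killingForm ℂ L (e i) (e j) = if i = j then 1 else 0)
    (P : ℕ → Fin d → ℕ →₀ L) (a b : Fin d) (x y : ℂ) :
    phiAB (e a) (e b) (rFun t ⇑e P x y)
      = (y - x)⁻¹ * (if a = b then 1 else 0) + Sfun t e P a b x y := by
  unfold rFun
  rw [map_add, map_smul, smul_eq_mul, phi_vFun t e horth P a b x y, map_sum]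
  congr 2
  have : ∀ l : Fin d, phiAB (e a) (e b) (e l ⊗ₜ[ℂ] e l)
      = if a = l then (if b = l then 1 else 0) else 0 := by
    intro l
    rw [phiAB_tmul, horth, horth]
    by_cases h : a = l <;> simp [h]
  rw [Finset.sum_congr rfl fun l _ => this l, Finset.sum_ite_eq (univ : Finset (Fin d)) a]
  by_cases h : a = b <;> simp [h, eq_comm]

lemma Sfun_skew (t : ℕ) (e : Module.Basis (Fin d) ℂ L)
    (horth : ∀ i j, killingForm ℂ L (e i) (e j) = if i = j then 1 else 0)
    (P : ℕ → Fin d → ℕ →₀ L)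
    (hskew : ∀ x y : ℂ, x ≠ y →
      rFun t ⇑e P x y = - (TensorProduct.comm ℂ L L (rFun t ⇑e P y x)))
    (a b : Fin d) (x y : ℂ) (hxy : x ≠ y) :
    Sfun t e P a b x y + Sfun t e P b a y x = 0 := by
  have h := congrArg (phiAB (e a) (e b)) (hskew x y hxy)
  rw [map_neg, phiAB_comm, phi_rFun t e horth P a b x y,
    phi_rFun t e horth P b a y x] at h
  have hinv : (x - y)⁻¹ = -(y - x)⁻¹ := by rw [← neg_sub, inv_neg]
  rw [hinv] at h
  have hab : (if b = a then (1:ℂ) else 0) = (if a = b then 1 else 0) := by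
    by_cases hc : a = b <;> simp [hc, Ne.symm]
  rw [hab] at h
  linear_combination h

end Skew
section SkewCoeff
open Finset

variable {L : Type*} [LieRing L] [LieAlgebra ℂ L] {d : ℕ}

lemma skewP (t : ℕ) (e : Module.Basis (Fin d) ℂ L)
    (horth : ∀ i j, killingForm ℂ L (e i) (e j) = if i = j then 1 else 0)
    (P : ℕ → Fin d → ℕ →₀ L)
    (hPtop : ∀ k l, t < k → P k l = 0)
    (hskew : ∀ x y : ℂ, x ≠ y →
      rFun t ⇑e P x y = - (TensorProduct.comm ℂ L L (rFun t ⇑e P y x)))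
    (a b : Fin d) (k m : ℕ) :
    killingForm ℂ L (e a) ((P k b) m) = - killingForm ℂ L (e b) ((P m a) k) := by
  -- choose a uniform bound M
  obtain ⟨M, hMt, hM⟩ : ∃ M : ℕ, t + 1 ≤ M ∧ ∀ k (l : Fin d) m, M ≤ m → (P k l) m = 0 := by
    refine ⟨t + 1 + ((range (t+1) ×ˢ (univ : Finset (Fin d))).sup
      fun p => (P p.1 p.2).support.sup id), le_add_of_nonneg_right (Nat.zero_le _), ?_⟩
    intro k l m hm
    by_cases hk : t < k
    · rw [hPtop k l hk]; rfl
    · by_contra h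
      have hmem : m ∈ (P k l).support := Finsupp.mem_support_iff.mpr h
      have h1 : m ≤ (P k l).support.sup id := Finset.le_sup (f := id) hmem
      have h2 : (P k l).support.sup id ≤ (range (t+1) ×ˢ (univ : Finset (Fin d))).sup
          (fun p => (P p.1 p.2).support.sup id) :=
        Finset.le_sup (f := fun p : ℕ × Fin d => (P p.1 p.2).support.sup id) (b := (k, l))
          (Finset.mem_product.mpr ⟨Finset.mem_range.mpr (by omega), Finset.mem_univ l⟩)
      omega
  -- rewrite Sfun as a uniform double sum
  have hzero : ∀ (a b : Fin d) (k m : ℕ), M ≤ k ∨ M ≤ m →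
      killingForm ℂ L (e a) ((P k b) m) = 0 := by
    intro a b k m hkm
    rcases hkm with hk | hm
    · rw [hPtop k b (by omega)]; simp
    · rw [hM k b m hm, map_zero]
  have hrep : ∀ (a b : Fin d) (x y : ℂ), Sfun t e P a b x y
      = ∑ k ∈ range M, ∑ m ∈ range M,
          killingForm ℂ L (e a) ((P k b) m) * x ^ k * y ^ m := by
    intro a b x y
    unfold Sfun
    rw [Finset.sum_subset (Finset.range_subset_range.mpr hMt)]
    · refine Finset.sum_congr rfl fun k _ => ?_
      rw [Finsupp.sum_of_support_subset (P k b) (s := range M) ?hsub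
        (fun m c => y ^ m * killingForm ℂ L (e a) c) (by intro m _; simp)]
      · rw [Finset.sum_mul]
        refine Finset.sum_congr rfl fun m _ => by ring
      · intro m hmem
        rw [Finset.mem_range]
        by_contra hc
        exact Finsupp.mem_support_iff.mp hmem (hM k b m (by omega))
    · intro k _ hk
      rw [Finset.mem_range, not_lt] at hk
      rw [hPtop k b (by omega)]
      simp
  -- the double-sum coefficients vanish
  have hC : ∀ k m, k < M → m < M →
      killingForm ℂ L (e a) ((P k b) m) + killingForm ℂ L (e b) ((P m a) k) = 0 := by
    apply poly2_zero
    intro x y hxy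
    have h0 := Sfun_skew t e horth P hskew a b x y hxy
    rw [hrep a b x y, hrep b a y x] at h0
    calc ∑ k ∈ range M, ∑ m ∈ range M,
          (killingForm ℂ L (e a) ((P k b) m) + killingForm ℂ L (e b) ((P m a) k)) * x ^ k * y ^ m
        = (∑ k ∈ range M, ∑ m ∈ range M, killingForm ℂ L (e a) ((P k b) m) * x ^ k * y ^ m)
          + ∑ k ∈ range M, ∑ m ∈ range M, killingForm ℂ L (e b) ((P k a) m) * y ^ k * x ^ m := by
          rw [Finset.sum_comm (s := range M) (t := range M)
            (f := fun k m => killingForm ℂ L (e b) ((P k a) m) * y ^ k * x ^ m)]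
          rw [← Finset.sum_add_distrib]
          refine Finset.sum_congr rfl fun k _ => ?_
          rw [← Finset.sum_add_distrib]
          refine Finset.sum_congr rfl fun m _ => by ring
      _ = 0 := h0
  by_cases hk : k < M
  · by_cases hm : m < M
    · have hckm := hC k m hk hm; linear_combination hckm
    · rw [hzero a b k m (Or.inr (by omega)), hzero b a m k (Or.inl (by omega)), neg_zero]
  · rw [hzero a b k m (Or.inl (by omega)), hzero b a m k (Or.inr (by omega)), neg_zero]

end SkewCoeff
section Pairing
open Finset

variable {L : Type*} [LieRing L] [LieAlgebra ℂ L] {d : ℕ}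

lemma mul_zm_coeff (f : Kz) (j : ℤ) : (f * zm j).coeff (-1) = f.coeff (-1 - j) := by
  have h := HahnSeries.coeff_mul_single_add (x := f) (a := -1 - j) (b := j) (r := (1 : ℂ))
  rw [sub_add_cancel] at h
  rw [zm, h, mul_one]

lemma KBL_tmul_zm (i j : ℤ) (u v : L) :
    KBL L (zm i ⊗ₜ[ℂ] u) (zm j ⊗ₜ[ℂ] v)
      = killingForm ℂ L u v * (if i + j = -1 then 1 else 0) := by
  rw [KBL_tmul, zm_mul_coeff]

/-- The value of the pairing on two generators of `W`. -/
lemma KBL_fEl_fEl (t : ℕ) (e : Module.Basis (Fin d) ℂ L)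
    (horth : ∀ i j, killingForm ℂ L (e i) (e j) = if i = j then 1 else 0)
    (P : ℕ → Fin d → ℕ →₀ L)
    (hPtop : ∀ k l, t < k → P k l = 0)
    (hskew : ∀ x y : ℂ, x ≠ y →
      rFun t ⇑e P x y = - (TensorProduct.comm ℂ L L (rFun t ⇑e P y x)))
    (k k' : ℕ) (l l' : Fin d) :
    KBL L (fEl ⇑e P k l) (fEl ⇑e P k' l') = 0 := by
  unfold fEl
  simp only [Finsupp.sum]
  simp only [map_add, map_sum, LinearMap.add_apply, LinearMap.sum_apply]
  have ht1 : KBL L (zm (-(k:ℤ) - 1) ⊗ₜ[ℂ] e l) (zm (-(k':ℤ) - 1) ⊗ₜ[ℂ] e l') = 0 := by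
    rw [KBL_tmul_zm, if_neg (by omega), mul_zero]
  have ht2 : ∑ m ∈ (P k' l').support,
      KBL L (zm (-(k:ℤ) - 1) ⊗ₜ[ℂ] e l) (zm (m:ℤ) ⊗ₜ[ℂ] (P k' l') m)
        = killingForm ℂ L (e l) ((P k' l') k) := by
    have : ∀ m ∈ (P k' l').support,
        KBL L (zm (-(k:ℤ) - 1) ⊗ₜ[ℂ] e l) (zm (m:ℤ) ⊗ₜ[ℂ] (P k' l') m)
          = if m = k then killingForm ℂ L (e l) ((P k' l') m) else 0 := by
      intro m _
      rw [KBL_tmul_zm]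
      by_cases hm : m = k
      · rw [if_pos hm, if_pos (by omega), mul_one]
      · rw [if_neg hm, if_neg (by omega), mul_zero]
    rw [Finset.sum_congr rfl this, Finset.sum_ite_eq' (P k' l').support k]
    by_cases hk : k ∈ (P k' l').support
    · rw [if_pos hk]
    · rw [if_neg hk, Finsupp.notMem_support_iff.mp hk, map_zero]
  have ht3 : ∑ m ∈ (P k l).support,
      KBL L (zm (m:ℤ) ⊗ₜ[ℂ] (P k l) m) (zm (-(k':ℤ) - 1) ⊗ₜ[ℂ] e l')
        = killingForm ℂ L (e l') ((P k l) k') := by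
    have : ∀ m ∈ (P k l).support,
        KBL L (zm (m:ℤ) ⊗ₜ[ℂ] (P k l) m) (zm (-(k':ℤ) - 1) ⊗ₜ[ℂ] e l')
          = if m = k' then killingForm ℂ L (e l') ((P k l) m) else 0 := by
      intro m _
      rw [KBL_tmul_zm, LieModule.traceForm_comm]
      by_cases hm : m = k'
      · rw [if_pos hm, if_pos (by omega), mul_one]
      · rw [if_neg hm, if_neg (by omega), mul_zero]
    rw [Finset.sum_congr rfl this, Finset.sum_ite_eq' (P k l).support k']
    by_cases hk : k' ∈ (P k l).support
    · rw [if_pos hk]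
    · rw [if_neg hk, Finsupp.notMem_support_iff.mp hk, map_zero]
  have ht4 : ∀ m' ∈ (P k' l').support, ∑ m ∈ (P k l).support,
      KBL L (zm (m:ℤ) ⊗ₜ[ℂ] (P k l) m) (zm (m':ℤ) ⊗ₜ[ℂ] (P k' l') m') = 0 := by
    intro m' _
    refine Finset.sum_eq_zero fun m _ => ?_
    rw [KBL_tmul_zm, if_neg (by omega), mul_zero]
  rw [ht1, ht3, Finset.sum_add_distrib, ht2, Finset.sum_congr rfl ht4]
  rw [skewP t e horth P hPtop hskew l l' k' k]
  simp

/-- `W` is isotropic. -/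
lemma Wsub_isotropic (t : ℕ) (e : Module.Basis (Fin d) ℂ L)
    (horth : ∀ i j, killingForm ℂ L (e i) (e j) = if i = j then 1 else 0)
    (P : ℕ → Fin d → ℕ →₀ L)
    (hPtop : ∀ k l, t < k → P k l = 0)
    (hskew : ∀ x y : ℂ, x ≠ y →
      rFun t ⇑e P x y = - (TensorProduct.comm ℂ L L (rFun t ⇑e P y x)))
    (u : Kz ⊗[ℂ] L) (hu : u ∈ Wsub ⇑e P) (w : Kz ⊗[ℂ] L) (hw : w ∈ Wsub ⇑e P) :
    KBL L u w = 0 := by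
  induction hu using Submodule.span_induction with
  | mem x hx =>
    obtain ⟨k, l, rfl⟩ := hx
    induction hw using Submodule.span_induction with
    | mem y hy =>
      obtain ⟨k', l', rfl⟩ := hy
      exact KBL_fEl_fEl t e horth P hPtop hskew k k' l l'
    | zero => rw [map_zero]
    | add y z _ _ hy hz => rw [map_add, hy, hz, add_zero]
    | smul c y _ hy => rw [map_smul, hy, smul_zero]
  | zero => rw [map_zero, LinearMap.zero_apply]
  | add y z _ _ hy hz => rw [map_add, LinearMap.add_apply, hy, hz, add_zero]
  | smul c y _ hy => rw [map_smul, LinearMap.smul_apply, hy, smul_zero]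

end Pairing
section Coord
open Finset

variable {L : Type*} [LieRing L] [LieAlgebra ℂ L] {d : ℕ}

lemma krepr (e : Module.Basis (Fin d) ℂ L)
    (horth : ∀ i j, killingForm ℂ L (e i) (e j) = if i = j then 1 else 0)
    (a : Fin d) (v : L) : killingForm ℂ L (e a) v = e.repr v a := by
  conv_lhs => rw [← Module.Basis.sum_repr e v]
  rw [map_sum]
  have : ∀ j : Fin d, killingForm ℂ L (e a) (e.repr v j • e j)
      = if j = a then e.repr v j else 0 := by
    intro j
    rw [map_smul, smul_eq_mul, horth a j]
    by_cases h : j = a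
    · rw [if_pos h, if_pos h.symm, mul_one]
    · rw [if_neg h, if_neg (Ne.symm h), mul_zero]
  rw [Finset.sum_congr rfl fun j _ => this j, Finset.sum_ite_eq' univ a]
  simp

lemma basis_expand (e : Module.Basis (Fin d) ℂ L)
    (horth : ∀ i j, killingForm ℂ L (e i) (e j) = if i = j then 1 else 0)
    (v : L) : ∑ a : Fin d, killingForm ℂ L (e a) v • e a = v := by
  conv_rhs => rw [← Module.Basis.sum_repr e v]
  exact Finset.sum_congr rfl fun a _ => by rw [krepr e horth]

/-- Reconstruction of a tensor from its coordinates. -/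
lemma recon (e : Module.Basis (Fin d) ℂ L)
    (horth : ∀ i j, killingForm ℂ L (e i) (e j) = if i = j then 1 else 0)
    (u : Kz ⊗[ℂ] L) : u = ∑ a : Fin d, (kco (e a) u) ⊗ₜ[ℂ] e a := by
  induction u using TensorProduct.induction_on with
  | zero => simp
  | tmul f v =>
    rw [eq_comm]
    calc ∑ a : Fin d, (kco (e a) (f ⊗ₜ[ℂ] v)) ⊗ₜ[ℂ] e a
        = ∑ a : Fin d, f ⊗ₜ[ℂ] (killingForm ℂ L (e a) v • e a) := by
          refine Finset.sum_congr rfl fun a _ => ?_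
          rw [kco_tmul, TensorProduct.smul_tmul]
      _ = f ⊗ₜ[ℂ] v := by
          rw [← TensorProduct.tmul_sum, basis_expand e horth]
  | add x y hx hy =>
    calc x + y = (∑ a : Fin d, (kco (e a) x) ⊗ₜ[ℂ] e a)
        + ∑ a : Fin d, (kco (e a) y) ⊗ₜ[ℂ] e a := by rw [← hx, ← hy]
      _ = ∑ a : Fin d, (kco (e a) (x + y)) ⊗ₜ[ℂ] e a := by
          rw [← Finset.sum_add_distrib]
          refine Finset.sum_congr rfl fun a _ => ?_
          rw [map_add, TensorProduct.add_tmul]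

lemma kco_fEl (e : Module.Basis (Fin d) ℂ L) (P : ℕ → Fin d → ℕ →₀ L)
    (a : Fin d) (k : ℕ) (l : Fin d) :
    kco (e a) (fEl ⇑e P k l)
      = killingForm ℂ L (e a) (e l) • zm (-(k:ℤ) - 1)
        + ∑ m ∈ (P k l).support, killingForm ℂ L (e a) ((P k l) m) • zm (m:ℤ) := by
  unfold fEl
  simp only [Finsupp.sum]
  rw [map_add, map_sum, kco_tmul]
  exact congrArg _ (Finset.sum_congr rfl fun m _ => kco_tmul _ _ _)

lemma zm_coeff (i n : ℤ) : (zm i).coeff n = if n = i then 1 else 0 := by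
  simp [zm, HahnSeries.coeff_single]

lemma kco_fEl_coeff_neg (e : Module.Basis (Fin d) ℂ L)
    (horth : ∀ i j, killingForm ℂ L (e i) (e j) = if i = j then 1 else 0)
    (P : ℕ → Fin d → ℕ →₀ L)
    (a : Fin d) (k : ℕ) (l : Fin d) (n : ℤ) (hn : n < 0) :
    (kco (e a) (fEl ⇑e P k l)).coeff n
      = (if a = l then 1 else 0) * (if n = -(k:ℤ) - 1 then 1 else 0) := by
  rw [kco_fEl]
  show ((killingForm ℂ L (e a) (e l)) • zm (-(k:ℤ)-1)
      + ∑ m ∈ (P k l).support, killingForm ℂ L (e a) ((P k l) m) • zm (m:ℤ)).coeff n = _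
  rw [HahnSeries.coeff_add]
  have h2 : (∑ m ∈ (P k l).support,
      killingForm ℂ L (e a) ((P k l) m) • zm (m:ℤ)).coeff n = 0 := by
    rw [show (∑ m ∈ (P k l).support,
        killingForm ℂ L (e a) ((P k l) m) • zm (m:ℤ)).coeff n
      = coeffL n (∑ m ∈ (P k l).support,
        killingForm ℂ L (e a) ((P k l) m) • zm (m:ℤ)) from rfl, map_sum]
    refine Finset.sum_eq_zero fun m _ => ?_
    show (killingForm ℂ L (e a) ((P k l) m) • zm (m:ℤ)).coeff n = 0
    rw [HahnSeries.coeff_smul, zm_coeff, if_neg (by omega), smul_zero]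
  rw [h2, add_zero]
  rw [HahnSeries.coeff_smul, zm_coeff, horth, smul_eq_mul]

end Coord
section Final
open Finset

variable {L : Type*} [LieRing L] [LieAlgebra ℂ L] {d : ℕ}

lemma KBL_tmul_fEl (e : Module.Basis (Fin d) ℂ L)
    (horth : ∀ i j, killingForm ℂ L (e i) (e j) = if i = j then 1 else 0)
    (P : ℕ → Fin d → ℕ →₀ L) (a : Fin d) (f : Kz)
    (hf : ∀ n : ℤ, n < 0 → f.coeff n = 0) (k : ℕ) (l : Fin d) :
    KBL L (f ⊗ₜ[ℂ] e a) (fEl ⇑e P k l) = (if a = l then 1 else 0) * f.coeff (k:ℤ) := by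
  unfold fEl
  simp only [Finsupp.sum]
  rw [map_add, map_sum]
  have h1 : KBL L (f ⊗ₜ[ℂ] e a) (zm (-(k:ℤ) - 1) ⊗ₜ[ℂ] e l)
      = (if a = l then 1 else 0) * f.coeff (k:ℤ) := by
    rw [KBL_tmul, mul_zm_coeff, horth]
    congr 1
    congr 1
    omega
  have h2 : ∀ m ∈ (P k l).support,
      KBL L (f ⊗ₜ[ℂ] e a) (zm (m:ℤ) ⊗ₜ[ℂ] (P k l) m) = 0 := by
    intro m _
    rw [KBL_tmul, mul_zm_coeff, hf (-1 - (m:ℤ)) (by omega), mul_zero]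
  rw [h1, Finset.sum_congr rfl h2]
  simp

end Final
/-- With the notation and hypotheses of the rational-solution setup, the
subspace `W ⊆ 𝔤((z))` is Lagrangian with respect to the residue pairing `κ̄`: `W^⊥ = W`. -/
theorem statement10
    (L : Type*) [LieRing L] [LieAlgebra ℂ L]
    [Module.Finite ℂ L] [LieAlgebra.IsSimple ℂ L]
    (d t : ℕ) (e : Module.Basis (Fin d) ℂ L)
    (horth : ∀ i j, killingForm ℂ L (e i) (e j) = if i = j then 1 else 0)
    (P : ℕ → Fin d → ℕ →₀ L)
    (hPtop : ∀ k l, t < k → P k l = 0)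
    (hPdeg : t ≠ 0 → ∃ l, P t l ≠ 0)
    (B1213 B1223 B1323 :
      (L ⊗[ℂ] L) →ₗ[ℂ] (L ⊗[ℂ] L) →ₗ[ℂ] (L ⊗[ℂ] (L ⊗[ℂ] L)))
    (hB1213 : ∀ a b c dd : L,
      B1213 (a ⊗ₜ[ℂ] b) (c ⊗ₜ[ℂ] dd) = ⁅a, c⁆ ⊗ₜ[ℂ] (b ⊗ₜ[ℂ] dd))
    (hB1223 : ∀ a b c dd : L,
      B1223 (a ⊗ₜ[ℂ] b) (c ⊗ₜ[ℂ] dd) = a ⊗ₜ[ℂ] (⁅b, c⁆ ⊗ₜ[ℂ] dd))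
    (hB1323 : ∀ a b c dd : L,
      B1323 (a ⊗ₜ[ℂ] b) (c ⊗ₜ[ℂ] dd) = a ⊗ₜ[ℂ] (c ⊗ₜ[ℂ] ⁅b, dd⁆))
    (hskew : ∀ x y : ℂ, x ≠ y →
      rFun t ⇑e P x y = - (TensorProduct.comm ℂ L L (rFun t ⇑e P y x)))
    (hCYBE : ∀ x₁ x₂ x₃ : ℂ, x₁ ≠ x₂ → x₁ ≠ x₃ → x₂ ≠ x₃ →
      B1213 (rFun t ⇑e P x₁ x₂) (rFun t ⇑e P x₁ x₃)
        + B1223 (rFun t ⇑e P x₁ x₂) (rFun t ⇑e P x₂ x₃)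
        + B1323 (rFun t ⇑e P x₁ x₃) (rFun t ⇑e P x₂ x₃) = 0)
    :
    {u : Kz ⊗[ℂ] L | ∀ w ∈ Wsub ⇑e P, KB L u w = 0}
      = (Wsub ⇑e P : Set (Kz ⊗[ℂ] L)) := by
  ext u
  simp only [Set.mem_setOf_eq, SetLike.mem_coe]
  constructor
  · intro hu
    -- choose a bound on the negative support of the coordinates of u
    have hKa : ∀ a : Fin d, ∃ Ka : ℕ, ∀ n : ℤ, n < -(Ka:ℤ) →
        (kco (e a) u).coeff n = 0 := by
      intro a
      refine ⟨(-(kco (e a) u).order).toNat, fun n hn => ?_⟩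
      apply HahnSeries.coeff_eq_zero_of_lt_order
      have h1 := Int.self_le_toNat (-(kco (e a) u).order)
      omega
    choose Ka hKa using hKa
    set K : ℕ := (univ : Finset (Fin d)).sup Ka with hKdef
    have hK : ∀ a : Fin d, ∀ n : ℤ, n < -(K:ℤ) → (kco (e a) u).coeff n = 0 := by
      intro a n hn
      have h1 : Ka a ≤ K := Finset.le_sup (Finset.mem_univ a)
      exact hKa a n (by omega)
    -- the principal part of u, as an element of W
    set w : Kz ⊗[ℂ] L := ∑ k ∈ range K, ∑ a : Fin d,
      (kco (e a) u).coeff (-(k:ℤ) - 1) • fEl ⇑e P k a with hwdef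
    have hwW : w ∈ Wsub ⇑e P :=
      Submodule.sum_mem _ fun k _ => Submodule.sum_mem _ fun a _ =>
        Submodule.smul_mem _ _ (Submodule.subset_span ⟨k, a, rfl⟩)
    -- the remainder g = u - w
    have hgW : ∀ w' ∈ Wsub ⇑e P, KBL L (u - w) w' = 0 := by
      intro w' hw'
      rw [map_sub, LinearMap.sub_apply]
      have h1 : KBL L u w' = 0 := hu w' hw'
      rw [h1, Wsub_isotropic t e horth P hPtop hskew w hwW w' hw', sub_zero]
    -- negative coefficients of the coordinates of g vanish
    have hgneg : ∀ a : Fin d, ∀ n : ℤ, n < 0 → (kco (e a) (u - w)).coeff n = 0 := by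
      intro a n hn
      rw [map_sub]
      show ((kco (e a) u) - (kco (e a) w)).coeff n = 0
      rw [HahnSeries.coeff_sub]
      have hwcoeff : (kco (e a) w).coeff n
          = ∑ k ∈ range K, if n = -(k:ℤ) - 1 then (kco (e a) u).coeff (-(k:ℤ) - 1) else 0 := by
        rw [hwdef]
        rw [show (kco (e a) (∑ k ∈ range K, ∑ b : Fin d,
            (kco (e b) u).coeff (-(k:ℤ) - 1) • fEl ⇑e P k b)).coeff n
          = coeffL n (kco (e a) (∑ k ∈ range K, ∑ b : Fin d,
            (kco (e b) u).coeff (-(k:ℤ) - 1) • fEl ⇑e P k b)) from rfl]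
        rw [map_sum, map_sum]
        refine Finset.sum_congr rfl fun k _ => ?_
        rw [map_sum, map_sum]
        have hterm : ∀ b : Fin d,
            coeffL n (kco (e a) ((kco (e b) u).coeff (-(k:ℤ) - 1) • fEl ⇑e P k b))
              = if a = b then
                  ((kco (e b) u).coeff (-(k:ℤ) - 1) * if n = -(k:ℤ) - 1 then 1 else 0)
                else 0 := by
          intro b
          rw [map_smul, map_smul]
          show (kco (e b) u).coeff (-(k:ℤ) - 1) • (kco (e a) (fEl ⇑e P k b)).coeff n = _
          rw [kco_fEl_coeff_neg e horth P a k b n hn, smul_eq_mul]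
          by_cases hab : a = b
          · rw [if_pos hab, if_pos hab, one_mul]
          · rw [if_neg hab, if_neg hab, zero_mul, mul_zero]
        rw [Finset.sum_congr rfl fun b _ => hterm b, Finset.sum_ite_eq (univ : Finset (Fin d)) a]
        rw [if_pos (Finset.mem_univ a)]
        by_cases hnk : n = -(k:ℤ) - 1
        · rw [if_pos hnk, if_pos hnk, mul_one]
        · rw [if_neg hnk, if_neg hnk, mul_zero]
      rw [hwcoeff]
      by_cases hnK : n < -(K:ℤ)
      · rw [hK a n hnK, Finset.sum_eq_zero, sub_zero]
        intro k hk
        rw [Finset.mem_range] at hk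
        rw [if_neg (by omega)]
      · -- n = -(k0) - 1 with k0 < K
        obtain ⟨k0, hk0K, hk0⟩ : ∃ k0 : ℕ, k0 < K ∧ n = -(k0:ℤ) - 1 :=
          ⟨(-n - 1).toNat, by omega, by omega⟩
        have hsum : ∑ k ∈ range K, (if n = -(k:ℤ) - 1 then
            (kco (e a) u).coeff (-(k:ℤ) - 1) else 0)
            = (kco (e a) u).coeff (-(k0:ℤ) - 1) := by
          have : ∀ k ∈ range K, (if n = -(k:ℤ) - 1 then
              (kco (e a) u).coeff (-(k:ℤ) - 1) else 0)
              = if k = k0 then (kco (e a) u).coeff (-(k0:ℤ) - 1) else 0 := by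
            intro k _
            by_cases hkk : k = k0
            · rw [if_pos hkk, if_pos (by omega), hkk]
            · rw [if_neg hkk, if_neg (by omega)]
          rw [Finset.sum_congr rfl this, Finset.sum_ite_eq' (range K) k0,
            if_pos (Finset.mem_range.mpr hk0K)]
        rw [hsum, hk0, sub_self]
    -- nonnegative coefficients of the coordinates of g vanish
    have hgpos : ∀ (k : ℕ) (l : Fin d), (kco (e l) (u - w)).coeff (k:ℤ) = 0 := by
      intro k l
      have h0 := hgW (fEl ⇑e P k l) (Submodule.subset_span ⟨k, l, rfl⟩)
      rw [recon e horth (u - w), map_sum, LinearMap.sum_apply] at h0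
      have hterm : ∀ a : Fin d,
          KBL L ((kco (e a) (u - w)) ⊗ₜ[ℂ] e a) (fEl ⇑e P k l)
            = if a = l then (kco (e a) (u - w)).coeff (k:ℤ) else 0 := by
        intro a
        rw [KBL_tmul_fEl e horth P a _ (hgneg a) k l]
        by_cases hal : a = l
        · rw [if_pos hal, if_pos hal, one_mul]
        · rw [if_neg hal, if_neg hal, zero_mul]
      rw [Finset.sum_congr rfl fun a _ => hterm a,
        Finset.sum_ite_eq' (univ : Finset (Fin d)) l, if_pos (Finset.mem_univ l)] at h0
      exact h0
    -- hence g = 0 and u = w ∈ W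
    have hg0 : ∀ a : Fin d, kco (e a) (u - w) = 0 := by
      intro a
      ext n
      show (kco (e a) (u - w)).coeff n = (0 : Kz).coeff n
      rw [HahnSeries.coeff_zero]
      rcases lt_or_ge n 0 with hn | hn
      · exact hgneg a n hn
      · have : n = ((n.toNat : ℕ) : ℤ) := by omega
        rw [this]
        exact hgpos n.toNat a
    have huw : u = w := by
      have := recon e horth (u - w)
      rw [Finset.sum_congr rfl fun a _ => by rw [hg0 a]] at this
      simp only [TensorProduct.zero_tmul, Finset.sum_const_zero] at this
      have h2 : u - w = 0 := this
      rw [sub_eq_zero] at h2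
      exact h2
    rw [huw]
    exact hwW
  · intro hu w hw
    exact Wsub_isotropic t e horth P hPtop hskew u hu w hw

end
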